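/- Let Γ be a group with finite symmetric generating set S whose Cayley graph has no odd cycles, equipped with a type system (T, t, M): T finite, t : Γ → T, and for all i,j ∈ T, for all but finitely many x with t(x) = j, the number of successors of x of type i equals M_{ij}. Define s_n(i) = #{x : d(e,x) = n, t(x) = i} and p_i = |S| − ∑_j M_{ji} (number of predecessors of a point of type i). Then for all sufficiently large n, p_i · s_{n+1}(i) = ∑_j M_{ij} s_n(j). -/

import Mathlib

open scoped BigOperators

/-- Word length of `x` with respect to a generating set `S`. -/
noncomputable def wordLength {Γ : Type*} [Group Γ] (S : Set Γ) (x : Γ) : ℕ :=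
  sInf {n | ∃ l : List Γ, l.length = n ∧ (∀ a ∈ l, a ∈ S) ∧ l.prod = x}

private lemma listSet_finite {Γ : Type*} {S : Set Γ} (hS : S.Finite) (n : ℕ) :
    {l : List Γ | l.length = n ∧ ∀ a ∈ l, a ∈ S}.Finite := by
  induction n with
  | zero =>
      refine Set.Finite.subset (Set.finite_singleton ([] : List Γ)) ?_
      rintro l ⟨hl, -⟩
      simpa using List.length_eq_zero_iff.mp hl
  | succ n ih =>
      refine Set.Finite.subset ((hS.prod ih).image (fun p : Γ × List Γ => p.1 :: p.2)) ?_
      rintro l ⟨hl, hs⟩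
      cases l with
      | nil => simp at hl
      | cons a l' =>
          refine ⟨(a, l'), ⟨hs a (by simp), ?_, fun b hb => hs b (by simp [hb])⟩, rfl⟩
          simpa using hl

private lemma wl_exists {Γ : Type*} [Group Γ] (S : Finset Γ)
    (hsym : ∀ s ∈ S, s⁻¹ ∈ S) (hgen : Subgroup.closure (S : Set Γ) = ⊤) (x : Γ) :
    ∃ l : List Γ, l.length = wordLength (S : Set Γ) x ∧ (∀ a ∈ l, a ∈ (S : Set Γ)) ∧
      l.prod = x := by
  have hx : x ∈ Subgroup.closure (S : Set Γ) := hgen ▸ Subgroup.mem_top x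
  have hx' : x ∈ Submonoid.closure ((S : Set Γ) ∪ (S : Set Γ)⁻¹) := by
    rw [← Subgroup.closure_toSubmonoid]; exact hx
  obtain ⟨l, hl, hprod⟩ := Submonoid.exists_list_of_mem_closure hx'
  have hlS : ∀ a ∈ l, a ∈ (S : Set Γ) := by
    intro a ha
    rcases hl a ha with h | h
    · exact h
    · have h' : a⁻¹ ∈ S := by simpa [Set.mem_inv] using h
      have := hsym _ h'
      rwa [inv_inv] at this
  have hne : {n | ∃ l : List Γ, l.length = n ∧ (∀ a ∈ l, a ∈ (S : Set Γ)) ∧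
      l.prod = x}.Nonempty := ⟨l.length, l, rfl, hlS, hprod⟩
  exact Nat.sInf_mem hne

private lemma sphere_finite {Γ : Type*} [Group Γ] (S : Finset Γ)
    (hsym : ∀ s ∈ S, s⁻¹ ∈ S) (hgen : Subgroup.closure (S : Set Γ) = ⊤) (n : ℕ) :
    {x : Γ | wordLength (S : Set Γ) x = n}.Finite := by
  refine Set.Finite.subset ((listSet_finite (S.finite_toSet) n).image List.prod) ?_
  intro x hx
  obtain ⟨l, hlen, hmem, hprod⟩ := wl_exists S hsym hgen x
  exact ⟨l, ⟨by rw [hlen]; exact hx, hmem⟩, hprod⟩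

/-- For a group `Γ` with finite symmetric generating set `S`, whose Cayley graph has no
odd cycles, equipped with a type system `(T, t, M)`: writing
`s_n(i) = #{x : ℓ(x) = n, t(x) = i}` and `p_i = |S| - ∑_j M_{ji}`, for all sufficiently
large `n` one has `p_i · s_{n+1}(i) = ∑_j M_{ij} s_n(j)`. -/
theorem stmt_17 {Γ : Type*} [Group Γ] (S : Finset Γ)
    (T : Type*) [Fintype T] (t : Γ → T) (M : T → T → ℕ)
    (hsym : ∀ s ∈ S, s⁻¹ ∈ S)
    (hgen : Subgroup.closure (S : Set Γ) = ⊤)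
    -- no odd cycles: every edge of the Cayley graph changes the distance to `e` by one
    (hbip : ∀ (x : Γ), ∀ s ∈ S,
      wordLength (S : Set Γ) (x * s) = wordLength (S : Set Γ) x + 1 ∨
      wordLength (S : Set Γ) x = wordLength (S : Set Γ) (x * s) + 1)
    -- type system: all but finitely many `x` of type `j` have `M i j` successors of type `i`
    (htype : ∀ i j : T, {x : Γ | t x = j ∧
        Set.ncard {y : Γ | (∃ s ∈ S, y = x * s) ∧
          wordLength (S : Set Γ) y = wordLength (S : Set Γ) x + 1 ∧ t y = i} ≠ M i j}.Finite)
    -- all but finitely many points of type `i` have `p_i = |S| - ∑_j M_{ji}` predecessors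
    (hpred : ∀ i : T, {x : Γ | t x = i ∧
        Set.ncard {y : Γ | (∃ s ∈ S, y = x * s) ∧
          wordLength (S : Set Γ) x = wordLength (S : Set Γ) y + 1} ≠
            S.card - ∑ j, M j i}.Finite) :
    ∃ N : ℕ, ∀ n : ℕ, N ≤ n → ∀ i : T,
      (S.card - ∑ j, M j i) *
          Set.ncard {x : Γ | wordLength (S : Set Γ) x = n + 1 ∧ t x = i} =
        ∑ j, M i j * Set.ncard {x : Γ | wordLength (S : Set Γ) x = n ∧ t x = j} := by
  classical
  set W : Γ → ℕ := wordLength (S : Set Γ) with hW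
  -- the finite exceptional set
  set F : Set Γ := (⋃ i : T, {x : Γ | t x = i ∧
        Set.ncard {y : Γ | (∃ s ∈ S, y = x * s) ∧ W x = W y + 1} ≠
          S.card - ∑ j, M j i}) ∪
      ⋃ i : T, ⋃ j : T, {x : Γ | t x = j ∧
        Set.ncard {y : Γ | (∃ s ∈ S, y = x * s) ∧ W y = W x + 1 ∧ t y = i} ≠ M i j}
    with hFdef
  have hF : F.Finite := by
    refine Set.Finite.union (Set.finite_iUnion fun i => hpred i) ?_
    exact Set.finite_iUnion fun i => Set.finite_iUnion fun j => htype i j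
  refine ⟨hF.toFinset.sup W + 1, fun n hn i => ?_⟩
  have hFout : ∀ x : Γ, n ≤ W x → x ∉ hF.toFinset := by
    intro x hx hmem
    have := Finset.le_sup (f := W) hmem
    omega
  -- the spheres as finsets
  set sphN : Finset Γ := (sphere_finite S hsym hgen n).toFinset with hsphN
  set sphN1 : Finset Γ := (sphere_finite S hsym hgen (n + 1)).toFinset with hsphN1
  have hmemN : ∀ x : Γ, x ∈ sphN ↔ W x = n := by
    intro x; simp [hsphN, Set.Finite.mem_toFinset, Set.mem_setOf_eq, hW]
  have hmemN1 : ∀ x : Γ, x ∈ sphN1 ↔ W x = n + 1 := by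
    intro x; simp [hsphN1, Set.Finite.mem_toFinset, Set.mem_setOf_eq, hW]
  -- the double counting identity
  have hdouble :
      ∑ x ∈ sphN, (sphN1.filter (fun y => (∃ s ∈ S, y = x * s) ∧ t y = i)).card =
      ∑ y ∈ sphN1, (sphN.filter (fun x => (∃ s ∈ S, y = x * s) ∧ t y = i)).card := by
    simp only [Finset.card_filter]
    exact Finset.sum_comm
  -- left-hand evaluation : each x in sphere n of type j has M i j successors of type i
  have hfibL : ∀ x ∈ sphN,
      (sphN1.filter (fun y => (∃ s ∈ S, y = x * s) ∧ t y = i)).card = M i (t x) := by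
    intro x hx
    have hxW : W x = n := (hmemN x).mp hx
    have hxout : x ∉ F := by
      intro hmem
      exact hFout x (le_of_eq hxW.symm) (hF.mem_toFinset.mpr hmem)
    have hxne : Set.ncard {y : Γ | (∃ s ∈ S, y = x * s) ∧ W y = W x + 1 ∧ t y = i}
        = M i (t x) := by
      by_contra hc
      exact hxout (Set.mem_union_right _ (Set.mem_iUnion.2 ⟨i, Set.mem_iUnion.2
        ⟨t x, ⟨rfl, hc⟩⟩⟩))
    have hset : {y : Γ | (∃ s ∈ S, y = x * s) ∧ W y = W x + 1 ∧ t y = i}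
        = ↑(sphN1.filter (fun y => (∃ s ∈ S, y = x * s) ∧ t y = i)) := by
      ext y
      simp only [Set.mem_setOf_eq, Finset.coe_filter, hmemN1, hxW]
      tauto
    rw [← hxne, hset, Set.ncard_coe_finset]
  -- right-hand evaluation
  have hfibR : ∀ y ∈ sphN1,
      (sphN.filter (fun x => (∃ s ∈ S, y = x * s) ∧ t y = i)).card =
        if t y = i then S.card - ∑ j, M j i else 0 := by
    intro y hy
    have hyW : W y = n + 1 := (hmemN1 y).mp hy
    by_cases hti : t y = i
    · rw [if_pos hti]
      have hyout : y ∉ F := by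
        intro hmem
        exact hFout y (by omega) (hF.mem_toFinset.mpr hmem)
      have hyne : Set.ncard {z : Γ | (∃ s ∈ S, z = y * s) ∧ W y = W z + 1}
          = S.card - ∑ j, M j i := by
        by_contra hc
        exact hyout (Set.mem_union_left _ (Set.mem_iUnion.2 ⟨i, ⟨hti, hc⟩⟩))
      have hset : {z : Γ | (∃ s ∈ S, z = y * s) ∧ W y = W z + 1}
          = ↑(sphN.filter (fun x => (∃ s ∈ S, y = x * s) ∧ t y = i)) := by
        ext z
        simp only [Set.mem_setOf_eq, Finset.coe_filter, hmemN]
        constructor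
        · rintro ⟨⟨s, hs, hzs⟩, hwl⟩
          refine ⟨by omega, ⟨s⁻¹, hsym s hs, by rw [hzs]; group⟩, hti⟩
        · rintro ⟨hz, ⟨s, hs, hys⟩, -⟩
          exact ⟨⟨s⁻¹, hsym s hs, by rw [hys]; group⟩, by omega⟩
      rw [← hyne, hset, Set.ncard_coe_finset]
    · rw [if_neg hti]
      rw [Finset.card_eq_zero, Finset.filter_eq_empty_iff]
      intro x _ h
      exact hti h.2
  -- now put everything together
  have hL : ∑ x ∈ sphN, (sphN1.filter (fun y => (∃ s ∈ S, y = x * s) ∧ t y = i)).card =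
      ∑ j, M i j * Set.ncard {x : Γ | W x = n ∧ t x = j} := by
    rw [Finset.sum_congr rfl hfibL]
    rw [← Finset.sum_fiberwise sphN t (fun x => M i (t x))]
    refine Finset.sum_congr rfl fun j _ => ?_
    have : ∀ x ∈ sphN.filter (fun x => t x = j), M i (t x) = M i j := by
      intro x hx
      rw [(Finset.mem_filter.mp hx).2]
    rw [Finset.sum_congr rfl this, Finset.sum_const, smul_eq_mul, mul_comm]
    congr 1
    rw [← Set.ncard_coe_finset]
    congr 1
    ext x
    simp [hmemN, Set.mem_setOf_eq, and_comm]
  have hR : ∑ y ∈ sphN1, (sphN.filter (fun x => (∃ s ∈ S, y = x * s) ∧ t y = i)).card =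
      (S.card - ∑ j, M j i) * Set.ncard {x : Γ | W x = n + 1 ∧ t x = i} := by
    rw [Finset.sum_congr rfl hfibR, ← Finset.sum_filter,
      Finset.sum_const, smul_eq_mul, mul_comm]
    congr 1
    rw [← Set.ncard_coe_finset]
    congr 1
    ext x
    simp [hmemN1, Set.mem_setOf_eq, and_comm]
  rw [← hR, ← hdouble, hL]
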